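/- Let k ≥ 3, and let (t₁,t₂,t₃) be any positive solution of the saddle point system tᵢ ∂ln f/∂tᵢ = cᵢ for f(x₁,x₂,x₃) = (1+x₁+x₂+x₃)^k − (1+x₁)^k − (1+x₃)^k + 1 with c₁ = c₃. Then t₁ = t₃. -/

import Mathlib

/-- Key inequality: for `0 ≤ b ≤ a`, `a(1+a)^n - b(1+b)^n ≤ (a-b)(1+a+b)^n`. -/
lemma aux_hump (n : ℕ) (a b : ℝ) (hb : 0 ≤ b) (hba : b ≤ a) :
    a * (1+a)^n - b * (1+b)^n ≤ (a-b) * (1+a+b)^n := by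
  induction n with
  | zero => simp
  | succ n ih =>
    have ha : 0 ≤ a := le_trans hb hba
    have h1 : (1+a)^n ≤ (1+a+b)^n := pow_le_pow_left₀ (by linarith) (by linarith) n
    calc a * (1+a)^(n+1) - b * (1+b)^(n+1)
        = (1+b) * (a*(1+a)^n - b*(1+b)^n) + (a-b) * (a*(1+a)^n) := by ring
      _ ≤ (1+b) * ((a-b)*(1+a+b)^n) + (a-b) * (a*(1+a+b)^n) := by
          apply add_le_add
          · exact mul_le_mul_of_nonneg_left ih (by linarith)
          · exact mul_le_mul_of_nonneg_left (mul_le_mul_of_nonneg_left h1 ha) (by linarith)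
      _ = (a-b) * (1+a+b)^(n+1) := by ring

/-- `x^k + y^k ≤ (x+y-1)^k + 1` for `x, y ≥ 1`. -/
lemma aux_fpos (k : ℕ) (x y : ℝ) (hx : 1 ≤ x) (hy : 1 ≤ y) :
    x^k + y^k ≤ (x+y-1)^k + 1 := by
  induction k with
  | zero => norm_num
  | succ k ih =>
    have hs : (1:ℝ) ≤ x + y - 1 := by linarith
    have h1 : (1:ℝ) ≤ x^k := one_le_pow₀ hx
    have h2 : (1:ℝ) ≤ y^k := one_le_pow₀ hy
    have h3 : (x+y-1) * (x^k + y^k) ≤ (x+y-1) * ((x+y-1)^k + 1) :=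
      mul_le_mul_of_nonneg_left ih (by linarith)
    simp only [pow_succ]
    nlinarith [h3, mul_nonneg (sub_nonneg.2 hy) (sub_nonneg.2 h1),
      mul_nonneg (sub_nonneg.2 hx) (sub_nonneg.2 h2)]

lemma aux_nocross (n : ℕ) (hn : 1 ≤ n) (a b S : ℝ) (hb : 0 < b) (hba : b < a)
    (hS : 1 + a + b < S)
    (heq : b * (S^n - (1+b)^n) = a * (S^n - (1+a)^n)) : False := by
  have key := aux_hump n a b hb.le hba.le
  have h1 : (1+a+b)^n < S^n :=
    pow_lt_pow_left₀ hS (by linarith) (by omega)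
  have h2 : (a-b) * (1+a+b)^n < (a-b) * S^n :=
    mul_lt_mul_of_pos_left h1 (by linarith)
  nlinarith [key, h2, heq]

theorem stmt_12 (k : ℕ) (hk : 3 ≤ k)
    (f : ℝ → ℝ → ℝ → ℝ)
    (hf : ∀ x₁ x₂ x₃ : ℝ, f x₁ x₂ x₃
      = (1 + x₁ + x₂ + x₃) ^ k - (1 + x₁) ^ k - (1 + x₃) ^ k + 1)
    (t₁ t₂ t₃ c c₂ : ℝ) (h₁ : 0 < t₁) (h₂ : 0 < t₂) (h₃ : 0 < t₃)
    (e₁ : t₁ * deriv (fun x => f x t₂ t₃) t₁ / f t₁ t₂ t₃ = c)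
    (e₂ : t₂ * deriv (fun x => f t₁ x t₃) t₂ / f t₁ t₂ t₃ = c₂)
    (e₃ : t₃ * deriv (fun x => f t₁ t₂ x) t₃ / f t₁ t₂ t₃ = c) :
    t₁ = t₃ := by
  set S : ℝ := 1 + t₁ + t₂ + t₃ with hSdef
  -- positivity of f
  have hF : 0 < f t₁ t₂ t₃ := by
    rw [hf]
    have h := aux_fpos k (1+t₁) (1+t₃) (by linarith) (by linarith)
    have hlt : ((1+t₁)+(1+t₃)-1)^k < (1 + t₁ + t₂ + t₃)^k :=
      pow_lt_pow_left₀ (by linarith) (by linarith) (by omega)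
    linarith
  -- derivatives
  have hfun1 : (fun x => f x t₂ t₃)
      = fun x => (1 + x + t₂ + t₃)^k - (1 + x)^k - (1 + t₃)^k + 1 :=
    funext fun x => hf x t₂ t₃
  have hfun3 : (fun x => f t₁ t₂ x)
      = fun x => (1 + t₁ + t₂ + x)^k - (1 + t₁)^k - (1 + x)^k + 1 :=
    funext fun x => hf t₁ t₂ x
  have hd1 : HasDerivAt (fun x => f x t₂ t₃)
      ((k:ℝ) * S^(k-1) * 1 - (k:ℝ) * (1+t₁)^(k-1) * 1) t₁ := by
    rw [hfun1]
    have hin : HasDerivAt (fun x : ℝ => 1 + x + t₂ + t₃) 1 t₁ := by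
      simpa using (((hasDerivAt_id t₁).const_add 1).add_const t₂).add_const t₃
    have hin2 : HasDerivAt (fun x : ℝ => 1 + x) 1 t₁ := by
      simpa using (hasDerivAt_id t₁).const_add 1
    exact (((hin.pow k).sub (hin2.pow k)).sub_const _).add_const _
  have hd3 : HasDerivAt (fun x => f t₁ t₂ x)
      ((k:ℝ) * S^(k-1) * 1 - (k:ℝ) * (1+t₃)^(k-1) * 1) t₃ := by
    rw [hfun3]
    have hin : HasDerivAt (fun x : ℝ => 1 + t₁ + t₂ + x) 1 t₃ := by
      simpa using (hasDerivAt_id t₃).const_add (1 + t₁ + t₂)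
    have hin2 : HasDerivAt (fun x : ℝ => 1 + x) 1 t₃ := by
      simpa using (hasDerivAt_id t₃).const_add 1
    exact ((((hin.pow k).sub_const _).sub (hin2.pow k))).add_const _
  rw [hd1.deriv] at e₁
  rw [hd3.deriv] at e₃
  have hkey : t₁ * ((k:ℝ) * S^(k-1) - (k:ℝ) * (1+t₁)^(k-1))
      = t₃ * ((k:ℝ) * S^(k-1) - (k:ℝ) * (1+t₃)^(k-1)) := by
    have h := e₁.trans e₃.symm
    field_simp [hF.ne'] at h
    linear_combination (k:ℝ) * h
  have hk0 : (0:ℝ) < (k:ℝ) := by positivity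
  have hkey2 : t₁ * (S^(k-1) - (1+t₁)^(k-1)) = t₃ * (S^(k-1) - (1+t₃)^(k-1)) := by
    have : (k:ℝ) * (t₁ * (S^(k-1) - (1+t₁)^(k-1)))
        = (k:ℝ) * (t₃ * (S^(k-1) - (1+t₃)^(k-1))) := by ring_nf; ring_nf at hkey; linarith
    exact mul_left_cancel₀ hk0.ne' this
  have hn : 1 ≤ k - 1 := by omega
  rcases lt_trichotomy t₁ t₃ with h | h | h
  · exact absurd (aux_nocross (k-1) hn t₃ t₁ S h₁ h (by simp [hSdef]; linarith) hkey2) id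
  · exact h
  · exact absurd (aux_nocross (k-1) hn t₁ t₃ S h₃ h (by simp [hSdef]; linarith) hkey2.symm) id
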